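/- Let β > 0, r₀ > 0, θ_β ∈ ℝ, and let a, b ∈ ℝ with (a, b) ≠ (0, 0). Set α := arctan(b/a) if a ≠ 0, and α := π/2 if a = 0. Let F : (0, ∞) → ℝ be continuous with F(λ) → 0 as λ → 0⁺. For n ∈ ℕ define λₙ⁰ := (2/r₀)·e^{(θ_β − α)/β}·e^{−nπ/β}. Then there exist n₀ ∈ ℕ and real numbers ηₙ ∈ (−π/2, π/2) for n ≥ n₀ such that ηₙ → 0 as n → ∞ and, setting λₙ := λₙ⁰·e^{ηₙ/β}, the equation −a·sin(θ_β − β·ln(λₙ r₀/2)) + b·cos(θ_β − β·ln(λₙ r₀/2)) = F(λₙ) holds for every n ≥ n₀. -/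

import Mathlib

set_option maxHeartbeats 800000

open Filter

theorem stmt2 (β r₀ θβ a b : ℝ) (hβ : 0 < β) (hr₀ : 0 < r₀)
    (hab : (a, b) ≠ (0, 0))
    (F : ℝ → ℝ) (hFcont : ContinuousOn F (Set.Ioi 0))
    (hF0 : Tendsto F (nhdsWithin 0 (Set.Ioi 0)) (nhds 0)) :
    ∃ (n₀ : ℕ) (η : ℕ → ℝ),
      (∀ n, n₀ ≤ n → η n ∈ Set.Ioo (-(Real.pi / 2)) (Real.pi / 2)) ∧
      Tendsto η atTop (nhds 0) ∧
      (∀ n, n₀ ≤ n →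
        -a * Real.sin (θβ - β * Real.log
            (((2 / r₀) * Real.exp ((θβ - (if a = 0 then Real.pi / 2 else Real.arctan (b / a))) / β)
              * Real.exp (-(n : ℝ) * Real.pi / β) * Real.exp (η n / β)) * r₀ / 2))
        + b * Real.cos (θβ - β * Real.log
            (((2 / r₀) * Real.exp ((θβ - (if a = 0 then Real.pi / 2 else Real.arctan (b / a))) / β)
              * Real.exp (-(n : ℝ) * Real.pi / β) * Real.exp (η n / β)) * r₀ / 2))
        = F ((2 / r₀) * Real.exp ((θβ - (if a = 0 then Real.pi / 2 else Real.arctan (b / a))) / β)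
              * Real.exp (-(n : ℝ) * Real.pi / β) * Real.exp (η n / β))) := by
  have hβ' : β ≠ 0 := hβ.ne'
  have hr₀' : r₀ ≠ 0 := hr₀.ne'
  set α := if a = 0 then Real.pi / 2 else Real.arctan (b / a) with hαdef
  set c := a * Real.cos α + b * Real.sin α with hc
  -- the orthogonality relation
  have hczero : -a * Real.sin α + b * Real.cos α = 0 := by
    by_cases ha : a = 0
    · simp [hαdef, ha]
    · have hs : (0:ℝ) < Real.sqrt (1 + (b / a) ^ 2) := Real.sqrt_pos.mpr (by positivity)
      simp only [hαdef, if_neg ha, Real.sin_arctan, Real.cos_arctan]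
      field_simp
      ring
  have hcne : c ≠ 0 := by
    by_cases ha : a = 0
    · have hb : b ≠ 0 := by
        intro hb; exact hab (by simp [ha, hb])
      simp [hc, hαdef, ha, hb]
    · have hs : (0:ℝ) < Real.sqrt (1 + (b / a) ^ 2) := Real.sqrt_pos.mpr (by positivity)
      have hkey : c * Real.sqrt (1 + (b / a) ^ 2) * a = a ^ 2 + b ^ 2 := by
        simp only [hc, hαdef, if_neg ha, Real.sin_arctan, Real.cos_arctan]
        field_simp
      intro h0
      rw [h0, zero_mul, zero_mul] at hkey
      have : a ^ 2 > 0 := by positivity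
      nlinarith
  set L : ℕ → ℝ → ℝ := fun n t => (2 / r₀) * Real.exp ((θβ - α) / β)
      * Real.exp (-(n : ℝ) * Real.pi / β) * Real.exp (t / β) with hLdef
  have hLpos : ∀ n t, 0 < L n t := by
    intro n t; simp only [hLdef]; positivity
  -- key trigonometric computation
  have key : ∀ (n : ℕ) (t : ℝ),
      -a * Real.sin (θβ - β * Real.log (L n t * r₀ / 2))
        + b * Real.cos (θβ - β * Real.log (L n t * r₀ / 2))
      = ((-1) ^ n * c) * Real.sin t := by
    intro n t
    have h1 : L n t * r₀ / 2
        = Real.exp ((θβ - α) / β + -(n : ℝ) * Real.pi / β + t / β) := by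
      rw [Real.exp_add, Real.exp_add, hLdef]
      field_simp
    have h2 : θβ - β * Real.log (L n t * r₀ / 2) = (α - t) + n * Real.pi := by
      rw [h1, Real.log_exp]
      field_simp
      ring
    rw [h2, Real.sin_add_nat_mul_pi, Real.cos_add_nat_mul_pi, Real.sin_sub, Real.cos_sub]
    linear_combination ((-1:ℝ) ^ n * Real.cos t) * hczero + ((-1:ℝ) ^ n * Real.sin t) * hc
  -- maximum of |F ∘ L n| over the η-interval
  have hLcont : ∀ n : ℕ, Continuous (L n) := by
    intro n
    simp only [hLdef]
    fun_prop
  have hFLcont : ∀ n : ℕ, ContinuousOn (fun t => F (L n t)) (Set.Icc (-(Real.pi/2)) (Real.pi/2)) := by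
    intro n
    exact hFcont.comp (hLcont n).continuousOn (fun t _ => hLpos n t)
  have hmax : ∀ n : ℕ, ∃ x ∈ Set.Icc (-(Real.pi/2)) (Real.pi/2),
      ∀ y ∈ Set.Icc (-(Real.pi/2)) (Real.pi/2), |F (L n y)| ≤ |F (L n x)| := by
    intro n
    have hne : (Set.Icc (-(Real.pi/2)) (Real.pi/2)).Nonempty := by
      refine ⟨0, ?_⟩
      constructor <;> [linarith [Real.pi_pos]; linarith [Real.pi_pos]]
    obtain ⟨x, hx, hmax⟩ := isCompact_Icc.exists_isMaxOn hne ((hFLcont n).abs)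
    exact ⟨x, hx, fun y hy => hmax hy⟩
  choose x hxmem hxmax using hmax
  set M : ℕ → ℝ := fun n => |F (L n (x n))| with hM
  have hMnonneg : ∀ n, 0 ≤ M n := fun n => abs_nonneg _
  -- M → 0
  have hLx0 : Tendsto (fun n => L n (x n)) atTop (nhdsWithin 0 (Set.Ioi 0)) := by
    apply tendsto_nhdsWithin_of_tendsto_nhds_of_eventually_within
    · have hub : ∀ n : ℕ, L n (x n) ≤ ((2 / r₀) * Real.exp ((θβ - α) / β)
          * Real.exp (Real.pi / 2 / β)) * Real.exp (-(n : ℝ) * Real.pi / β) := by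
        intro n
        have h1 : Real.exp ((x n) / β) ≤ Real.exp (Real.pi / 2 / β) := by
          apply Real.exp_le_exp.mpr
          gcongr
          exact (hxmem n).2
        calc L n (x n) = ((2 / r₀) * Real.exp ((θβ - α) / β) * Real.exp (-(n : ℝ) * Real.pi / β))
              * Real.exp ((x n) / β) := rfl
          _ ≤ ((2 / r₀) * Real.exp ((θβ - α) / β) * Real.exp (-(n : ℝ) * Real.pi / β))
              * Real.exp (Real.pi / 2 / β) := by
              apply mul_le_mul_of_nonneg_left h1
              positivity
          _ = _ := by ring
      have hexp : Tendsto (fun n : ℕ => Real.exp (-(n : ℝ) * Real.pi / β)) atTop (nhds 0) := by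
        apply Real.tendsto_exp_atBot.comp
        have : Tendsto (fun n : ℕ => (n : ℝ)) atTop atTop := tendsto_natCast_atTop_atTop
        have h2 : Tendsto (fun n : ℕ => (n : ℝ) * (-(Real.pi / β))) atTop atBot :=
          this.atTop_mul_const_of_neg (neg_lt_zero.mpr (by positivity))
        convert h2 using 2 with n
        ring
      have htends : Tendsto (fun n : ℕ => ((2 / r₀) * Real.exp ((θβ - α) / β)
          * Real.exp (Real.pi / 2 / β)) * Real.exp (-(n : ℝ) * Real.pi / β)) atTop (nhds 0) := by
        have := hexp.const_mul ((2 / r₀) * Real.exp ((θβ - α) / β) * Real.exp (Real.pi / 2 / β))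
        simpa using this
      exact squeeze_zero (fun n => (hLpos n (x n)).le) hub htends
    · exact Eventually.of_forall (fun n => hLpos n (x n))
  have hMto : Tendsto M atTop (nhds 0) := by
    have := (hF0.comp hLx0).abs
    simpa using this
  -- choose n₀
  have hev : ∀ᶠ n in atTop, M n < |c| / 4 := by
    have hc4 : (0:ℝ) < |c| / 4 := by positivity
    exact hMto.eventually_lt_const hc4
  obtain ⟨n₀, hn₀⟩ := eventually_atTop.mp hev
  -- define t n and m n
  set tt : ℕ → ℝ := fun n => min (1/2) (2 * M n / |c|) with htt
  have hcpos : (0:ℝ) < |c| := abs_pos.mpr hcne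
  have htt0 : ∀ n, 0 ≤ tt n := by
    intro n
    apply le_min (by norm_num)
    positivity
  have htt1 : ∀ n, tt n ≤ 1/2 := fun n => min_le_left _ _
  set m : ℕ → ℝ := fun n => Real.arcsin (tt n) with hm
  have hm0 : ∀ n, 0 ≤ m n := fun n => Real.arcsin_nonneg.mpr (htt0 n)
  have hmlt : ∀ n, m n < Real.pi / 2 := fun n =>
    Real.arcsin_lt_pi_div_two.mpr (lt_of_le_of_lt (htt1 n) (by norm_num))
  have hsinm : ∀ n, Real.sin (m n) = tt n := fun n =>
    Real.sin_arcsin (by linarith [htt0 n]) (by linarith [htt1 n])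
  have httval : ∀ n, n₀ ≤ n → tt n = 2 * M n / |c| := by
    intro n hn
    apply min_eq_right
    rw [div_le_div_iff₀ hcpos (by norm_num)]
    nlinarith [hn₀ n hn]
  -- existence of roots by IVT
  have claim : ∀ n, n₀ ≤ n → ∃ t, t ∈ Set.Icc (-(m n)) (m n) ∧
      ((-1:ℝ) ^ n * c) * Real.sin t = F (L n t) := by
    intro n hn
    set d : ℝ := (-1:ℝ) ^ n * c with hd
    have hdabs : |d| = |c| := by
      rw [hd, abs_mul, abs_pow, abs_neg, abs_one, one_pow, one_mul]
    have hdne : d ≠ 0 := fun h => by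
      rw [h, abs_zero] at hdabs; exact hcne (abs_eq_zero.mp hdabs.symm)
    have hsub : Set.Icc (-(m n)) (m n) ⊆ Set.Icc (-(Real.pi/2)) (Real.pi/2) := by
      apply Set.Icc_subset_Icc <;> [linarith [hmlt n]; linarith [hmlt n]]
    have hcontg : ContinuousOn (fun t => d * Real.sin t - F (L n t)) (Set.Icc (-(m n)) (m n)) := by
      apply ContinuousOn.sub
      · exact (Real.continuous_sin.continuousOn).const_smul d
      · exact (hFLcont n).mono hsub
    have hFb : ∀ t ∈ Set.Icc (-(m n)) (m n), |F (L n t)| ≤ M n := by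
      intro t ht
      exact hxmax n t (hsub ht)
    have hmem1 : -(m n) ∈ Set.Icc (-(m n)) (m n) := by
      constructor <;> linarith [hm0 n]
    have hmem2 : m n ∈ Set.Icc (-(m n)) (m n) := by
      constructor <;> linarith [hm0 n]
    have hdt : |d| * tt n = 2 * M n := by
      rw [hdabs, httval n hn]
      field_simp
    have hF1 := abs_le.mp (hFb _ hmem1)
    have hF2 := abs_le.mp (hFb _ hmem2)
    rcases lt_or_gt_of_ne hdne with hneg | hpos
    · -- d < 0 : g(-m n) ≥ 0 ≥ g(m n)
      have hdt' : -d * tt n = 2 * M n := by rw [← abs_of_neg hneg]; exact hdt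
      have h1 : 0 ≤ d * Real.sin (-(m n)) - F (L n (-(m n))) := by
        rw [Real.sin_neg, hsinm n]
        have := hF1.2
        nlinarith [hMnonneg n]
      have h2 : d * Real.sin (m n) - F (L n (m n)) ≤ 0 := by
        rw [hsinm n]
        have := hF2.1
        nlinarith [hMnonneg n]
      have hIVT := intermediate_value_Icc' (by linarith [hm0 n] : -(m n) ≤ m n) hcontg
      have : (0:ℝ) ∈ Set.Icc ((fun t => d * Real.sin t - F (L n t)) (m n))
          ((fun t => d * Real.sin t - F (L n t)) (-(m n))) := ⟨h2, h1⟩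
      obtain ⟨t, htmem, hteq⟩ := hIVT this
      exact ⟨t, htmem, by simpa [sub_eq_zero] using hteq⟩
    · have hdt' : d * tt n = 2 * M n := by rw [← abs_of_pos hpos]; exact hdt
      have h1 : d * Real.sin (-(m n)) - F (L n (-(m n))) ≤ 0 := by
        rw [Real.sin_neg, hsinm n]
        have := hF1.1
        nlinarith [hMnonneg n]
      have h2 : 0 ≤ d * Real.sin (m n) - F (L n (m n)) := by
        rw [hsinm n]
        have := hF2.2
        nlinarith [hMnonneg n]
      have hIVT := intermediate_value_Icc (by linarith [hm0 n] : -(m n) ≤ m n) hcontg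
      have : (0:ℝ) ∈ Set.Icc ((fun t => d * Real.sin t - F (L n t)) (-(m n)))
          ((fun t => d * Real.sin t - F (L n t)) (m n)) := ⟨h1, h2⟩
      obtain ⟨t, htmem, hteq⟩ := hIVT this
      exact ⟨t, htmem, by simpa [sub_eq_zero] using hteq⟩
  -- assemble
  set η : ℕ → ℝ := fun n => if h : n₀ ≤ n then (claim n h).choose else 0 with hη
  have hηspec : ∀ n (h : n₀ ≤ n), η n ∈ Set.Icc (-(m n)) (m n) ∧
      ((-1:ℝ) ^ n * c) * Real.sin (η n) = F (L n (η n)) := by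
    intro n h
    simp only [hη, dif_pos h]
    exact ⟨(claim n h).choose_spec.1, (claim n h).choose_spec.2⟩
  have hmto : Tendsto m atTop (nhds 0) := by
    have httto : Tendsto tt atTop (nhds 0) := by
      apply squeeze_zero htt0 (fun n => min_le_right _ _)
      have := hMto.const_mul (2 / |c|)
      simp only [mul_zero] at this
      convert this using 2 with n
      field_simp
    have := (Real.continuous_arcsin.tendsto 0).comp httto
    rw [Real.arcsin_zero] at this
    exact this
  refine ⟨n₀, η, ?_, ?_, ?_⟩
  · intro n hn
    obtain ⟨⟨h1, h2⟩, _⟩ := hηspec n hn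
    exact ⟨by linarith [hmlt n], by linarith [hmlt n]⟩
  · apply squeeze_zero_norm' _ hmto
    filter_upwards [eventually_atTop.mpr ⟨n₀, fun n hn => hn⟩] with n hn
    obtain ⟨⟨h1, h2⟩, _⟩ := hηspec n hn
    rw [Real.norm_eq_abs]
    exact abs_le.mpr ⟨h1, h2⟩
  · intro n hn
    have heq := (hηspec n hn).2
    have hk := key n (η n)
    exact hk.trans heq
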